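/- Let U ∈ ℝ^{n×r} have orthonormal columns and P be a selection matrix with PᵀU invertible. Then the DEIM projector 𝒫 = U (PᵀU)⁻¹ Pᵀ has spectral norm ‖𝒫‖₂ = ‖(PᵀU)⁻¹‖₂, provided r < n; in particular ‖𝒫‖₂ ≥ 1. -/
import Mathlib


open Matrix

/-- `P` is a selection matrix: its columns are distinct standard basis vectors of `ℝⁿ`. -/
def IsSelection {n p : ℕ} (P : Matrix (Fin n) (Fin p) ℝ) : Prop :=
  ∃ g : Fin p → Fin n, Function.Injective g ∧
    P = Matrix.of fun i j => if i = g j then (1 : ℝ) else 0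

/-- The spectral (Euclidean operator) norm of a real matrix. -/
noncomputable def specNorm {m n : ℕ} (A : Matrix (Fin m) (Fin n) ℝ) : ℝ :=
  ‖LinearMap.toContinuousLinearMap
      (Matrix.toEuclideanLin A : EuclideanSpace ℝ (Fin n) →ₗ[ℝ] EuclideanSpace ℝ (Fin m))‖

/-- The Euclidean norm of a vector in `ℝⁿ`. -/
noncomputable def vecNorm {n : ℕ} (f : Fin n → ℝ) : ℝ :=
  ‖(WithLp.equiv 2 (Fin n → ℝ)).symm f‖

open scoped Matrix.Norms.L2Operator

lemma selection_transpose_mul {n p : ℕ} {P : Matrix (Fin n) (Fin p) ℝ}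
    (hP : IsSelection P) : Pᵀ * P = 1 := by
  obtain ⟨g, hg, rfl⟩ := hP
  ext j k
  simp [Matrix.mul_apply, Matrix.one_apply, hg.eq_iff, eq_comm]

lemma specNorm_eq {m n : ℕ} (A : Matrix (Fin m) (Fin n) ℝ) : specNorm A = ‖A‖ := rfl

lemma norm_one_mat {r : ℕ} (hr : 0 < r) : ‖(1 : Matrix (Fin r) (Fin r) ℝ)‖ = 1 := by
  haveI : Nonempty (Fin r) := ⟨⟨0, hr⟩⟩
  rw [Matrix.cstar_norm_def, _root_.map_one]
  exact ContinuousLinearMap.norm_id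

lemma norm_of_ttm_one {m n : ℕ} (hn : 0 < n) {A : Matrix (Fin m) (Fin n) ℝ}
    (h : Aᵀ * A = 1) : ‖A‖ = 1 := by
  have h2 : ‖A‖ * ‖A‖ = 1 := by
    rw [← Matrix.l2_opNorm_conjTranspose_mul_self A,
      Matrix.conjTranspose_eq_transpose_of_trivial, h, norm_one_mat hn]
  nlinarith [norm_nonneg (A : Matrix (Fin m) (Fin n) ℝ), h2]

/-- The spectral norm of the DEIM projector equals `‖(PᵀU)⁻¹‖₂` when `r < n`,
and in particular it is at least one. -/
theorem deim_projector_norm {n r : ℕ} (U : Matrix (Fin n) (Fin r) ℝ)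
    (P : Matrix (Fin n) (Fin r) ℝ) (hU : Uᵀ * U = 1) (hP : IsSelection P)
    (hinv : IsUnit (Pᵀ * U)) (hr : 0 < r) (hrn : r < n) :
    specNorm (U * (Pᵀ * U)⁻¹ * Pᵀ) = specNorm (Pᵀ * U)⁻¹ ∧
    1 ≤ specNorm (U * (Pᵀ * U)⁻¹ * Pᵀ) := by
  have hPtP : Pᵀ * P = 1 := selection_transpose_mul hP
  have hnU : ‖U‖ = 1 := norm_of_ttm_one hr hU
  have hnP : ‖P‖ = 1 := norm_of_ttm_one hr hPtP
  have hnUt : ‖Uᵀ‖ = 1 := by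
    rw [← Matrix.conjTranspose_eq_transpose_of_trivial, Matrix.l2_opNorm_conjTranspose, hnU]
  have hnPt : ‖Pᵀ‖ = 1 := by
    rw [← Matrix.conjTranspose_eq_transpose_of_trivial, Matrix.l2_opNorm_conjTranspose, hnP]
  set M := (Pᵀ * U)⁻¹ with hM
  -- upper bound
  have hub : ‖U * M * Pᵀ‖ ≤ ‖M‖ := by
    calc ‖U * M * Pᵀ‖ ≤ ‖U * M‖ * ‖Pᵀ‖ := Matrix.l2_opNorm_mul _ _
      _ ≤ ‖U‖ * ‖M‖ * ‖Pᵀ‖ := by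
          have := Matrix.l2_opNorm_mul U M
          nlinarith [norm_nonneg Pᵀ]
      _ = ‖M‖ := by rw [hnU, hnPt]; ring
  -- reconstruction
  have hrec : Uᵀ * (U * M * Pᵀ) * P = M := by
    rw [show Uᵀ * (U * M * Pᵀ) * P = (Uᵀ * U) * M * (Pᵀ * P) by
      simp only [Matrix.mul_assoc], hU, hPtP, Matrix.one_mul, Matrix.mul_one]
  have hlb : ‖M‖ ≤ ‖U * M * Pᵀ‖ := by
    calc ‖M‖ = ‖Uᵀ * (U * M * Pᵀ) * P‖ := by rw [hrec]
      _ ≤ ‖Uᵀ * (U * M * Pᵀ)‖ * ‖P‖ := Matrix.l2_opNorm_mul _ _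
      _ ≤ ‖Uᵀ‖ * ‖U * M * Pᵀ‖ * ‖P‖ := by
          have := Matrix.l2_opNorm_mul Uᵀ (U * M * Pᵀ)
          nlinarith [norm_nonneg P]
      _ = ‖U * M * Pᵀ‖ := by rw [hnUt, hnP]; ring
  have heq : ‖U * M * Pᵀ‖ = ‖M‖ := le_antisymm hub hlb
  -- 1 ≤ ‖M‖
  have hMinv : M * (Pᵀ * U) = 1 :=
    Matrix.nonsing_inv_mul _ ((Matrix.isUnit_iff_isUnit_det _).mp hinv)
  have hnPU : ‖Pᵀ * U‖ ≤ 1 := by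
    calc ‖Pᵀ * U‖ ≤ ‖Pᵀ‖ * ‖U‖ := Matrix.l2_opNorm_mul _ _
      _ = 1 := by rw [hnU, hnPt]; ring
  have h1M : 1 ≤ ‖M‖ := by
    have : (1:ℝ) = ‖M * (Pᵀ * U)‖ := by rw [hMinv, norm_one_mat hr]
    have h2 := Matrix.l2_opNorm_mul M (Pᵀ * U)
    nlinarith [norm_nonneg M]
  refine ⟨?_, ?_⟩
  · rw [specNorm_eq, specNorm_eq, heq]
  · rw [specNorm_eq, heq]; exact h1M
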